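/- Let Λ be the Kronecker algebra over an algebraically closed field k, I ⊆ k, and J ⊆ I. Then there is a short exact sequence of Λ-modules 0 → P(J) → P(I) → S(I∖J) → 0, where S(I∖J) = ⊕_{λ ∈ I∖J} S_λ and S_λ is the simple regular module in the tube indexed by λ (the representation k ⇉ k with maps identity and multiplication by λ). -/

import Mathlib

universe u

variable (k : Type u) [Field k]

/-- A representation of the Kronecker quiver `0 ⇉ 1`: two vector spaces and two
linear maps. -/
structure KronRep where
  V : Type u
  W : Type u
  [addV : AddCommGroup V]
  [addW : AddCommGroup W]
  [modV : Module k V]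
  [modW : Module k W]
  a : V →ₗ[k] W
  b : V →ₗ[k] W

attribute [instance] KronRep.addV KronRep.addW KronRep.modV KronRep.modW

variable {k}

/-- A morphism of Kronecker representations. -/
@[ext]
structure KronHom (M N : KronRep k) where
  φ : M.V →ₗ[k] N.V
  ψ : M.W →ₗ[k] N.W
  comm_a : N.a.comp φ = ψ.comp M.a
  comm_b : N.b.comp φ = ψ.comp M.b

/-- The zero morphism. -/
def KronHom.zero (M N : KronRep k) : KronHom M N :=
  ⟨0, 0, by simp, by simp⟩

/-- The identity morphism. -/
def KronHom.id (M : KronRep k) : KronHom M M :=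
  ⟨LinearMap.id, LinearMap.id, by simp, by simp⟩

/-- `M` is the zero representation. -/
def KronRep.IsZeroRep (M : KronRep k) : Prop :=
  Subsingleton M.V ∧ Subsingleton M.W

/-- `M` is indecomposable: it is nonzero and its endomorphism ring has no nontrivial
idempotents. -/
def KronRep.Indecomposable (M : KronRep k) : Prop :=
  ¬ M.IsZeroRep ∧ ∀ e : KronHom M M,
    e.φ.comp e.φ = e.φ → e.ψ.comp e.ψ = e.ψ → e = KronHom.zero M M ∨ e = KronHom.id M

/-- For Kronecker representations, the finite-dimensional indecomposable preprojective
modules are exactly the indecomposables of dimension vector `(n, n+1)`. -/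
def KronRep.IsPreprojective (M : KronRep k) : Prop :=
  M.Indecomposable ∧ ∃ n : ℕ, Module.finrank k M.V = n ∧ Module.finrank k M.W = n + 1

variable (k)

/-- The subspace `V(I) ⊆ k(T)` spanned by the elements `1/(T - λ)`, `λ ∈ I`. -/
noncomputable def VI (I : Set k) : Submodule k (RatFunc k) :=
  Submodule.span k ((fun l : k => (RatFunc.X - RatFunc.C l)⁻¹) '' I)

/-- The subspace `V(I) + k·1 ⊆ k(T)`. -/
noncomputable def WI (I : Set k) : Submodule k (RatFunc k) :=
  VI k I ⊔ Submodule.span k {1}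

theorem mulX_mem (I : Set k) : ∀ v : RatFunc k, v ∈ VI k I →
    RatFunc.X * v ∈ WI k I := by
  intro v hv
  induction hv using Submodule.span_induction with
  | mem x hx =>
      obtain ⟨l, hl, rfl⟩ := hx
      have hne : (RatFunc.X - RatFunc.C l : RatFunc k) ≠ 0 := by
        have h1 : (RatFunc.X - RatFunc.C l : RatFunc k)
            = algebraMap (Polynomial k) (RatFunc k) (Polynomial.X - Polynomial.C l) := by
          simp [RatFunc.algebraMap_X, RatFunc.algebraMap_C]
        rw [h1]
        exact RatFunc.algebraMap_ne_zero (Polynomial.X_sub_C_ne_zero l)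
      have key : RatFunc.X * (RatFunc.X - RatFunc.C l)⁻¹
          = l • (RatFunc.X - RatFunc.C l)⁻¹ + 1 := by
        rw [Algebra.smul_def]
        field_simp
        rw [RatFunc.algebraMap_eq_C]
        ring
      rw [key]
      refine add_mem ?_ ?_
      · exact Submodule.mem_sup_left (Submodule.smul_mem _ _
          (Submodule.subset_span ⟨l, hl, rfl⟩))
      · exact Submodule.mem_sup_right (Submodule.subset_span rfl)
  | zero => simpa using (WI k I).zero_mem
  | add x y hx hy ihx ihy => simpa [mul_add] using add_mem ihx ihy
  | smul c x hx ih => simpa [Algebra.mul_smul_comm] using (WI k I).smul_mem c ih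

/-- Ringel's representation `P(I)`: the subrepresentation `(V(I) ⇉ V(I) + k·1)` of the
generic representation `(k(T) ⇉ k(T))`, whose maps are the inclusion and
multiplication by `T`. -/
noncomputable def Prep (I : Set k) : KronRep k where
  V := VI k I
  W := WI k I
  a := Submodule.inclusion le_sup_left
  b := LinearMap.codRestrict (WI k I)
    ((LinearMap.mulLeft k (RatFunc.X : RatFunc k)).comp (VI k I).subtype)
    (fun v => mulX_mem k I v v.2)

/-- The direct sum `S(s) = ⊕_{λ ∈ s} S_λ` of the simple regular representations
`S_λ = (k ⇉ k)` with maps `id` and `λ·id`. -/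
noncomputable def Srep (s : Set k) : KronRep k where
  V := s →₀ k
  W := s →₀ k
  a := LinearMap.id
  b := Finsupp.lsum k fun μ : s => (μ : k) • Finsupp.lsingle μ

namespace KronSES

open Polynomial

lemma Xsub_ne_zero (l : k) : (RatFunc.X - RatFunc.C l : RatFunc k) ≠ 0 := by
  have h1 : (RatFunc.X - RatFunc.C l : RatFunc k)
      = algebraMap (Polynomial k) (RatFunc k) (Polynomial.X - Polynomial.C l) := by
    simp [RatFunc.algebraMap_X, RatFunc.algebraMap_C]
  rw [h1]
  exact RatFunc.algebraMap_ne_zero (Polynomial.X_sub_C_ne_zero l)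

lemma algebraMap_Xsub (l : k) :
    algebraMap (Polynomial k) (RatFunc k) (Polynomial.X - Polynomial.C l)
      = RatFunc.X - RatFunc.C l := by
  simp [RatFunc.algebraMap_X, RatFunc.algebraMap_C]

lemma keyA (s : Finset k) (c : k → k) (d : k)
    (h : d • (1 : RatFunc k) + ∑ l ∈ s, c l • (RatFunc.X - RatFunc.C l)⁻¹ = 0) :
    d = 0 ∧ ∀ l ∈ s, c l = 0 := by
  classical
  have hc : ∀ l ∈ s, c l = 0 := by
    intro l0 hl0
    set P : Polynomial k := ∏ l ∈ s, (Polynomial.X - Polynomial.C l) with hP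
    have key : ∀ l ∈ s, (RatFunc.X - RatFunc.C l)⁻¹ * algebraMap (Polynomial k) (RatFunc k) P
        = algebraMap (Polynomial k) (RatFunc k)
            (∏ μ ∈ s.erase l, (Polynomial.X - Polynomial.C μ)) := by
      intro l hl
      have hfac : P = (Polynomial.X - Polynomial.C l)
          * ∏ μ ∈ s.erase l, (Polynomial.X - Polynomial.C μ) :=
        (Finset.mul_prod_erase s _ hl).symm
      rw [hfac, map_mul, algebraMap_Xsub, inv_mul_cancel_left₀ (Xsub_ne_zero k l)]
    have h2 : algebraMap (Polynomial k) (RatFunc k)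
        (Polynomial.C d * P + ∑ l ∈ s, Polynomial.C (c l)
          * ∏ μ ∈ s.erase l, (Polynomial.X - Polynomial.C μ)) = 0 := by
      have h1 := congrArg (· * algebraMap (Polynomial k) (RatFunc k) P) h
      simp only [add_mul, Finset.sum_mul, smul_mul_assoc, zero_mul, one_mul] at h1
      rw [map_add, map_mul, map_sum]
      rw [← h1]
      congr 1
      · rw [Algebra.smul_def, IsScalarTower.algebraMap_apply k (Polynomial k) (RatFunc k),
          Polynomial.algebraMap_eq]
      · refine Finset.sum_congr rfl fun l hl => ?_
        rw [map_mul, ← key l hl, Algebra.smul_def,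
          IsScalarTower.algebraMap_apply k (Polynomial k) (RatFunc k), Polynomial.algebraMap_eq]
    have hQ : Polynomial.C d * P + ∑ l ∈ s, Polynomial.C (c l)
        * ∏ μ ∈ s.erase l, (Polynomial.X - Polynomial.C μ) = 0 := by
      apply RatFunc.algebraMap_injective k
      rw [h2, map_zero]
    have hev := congrArg (Polynomial.eval l0) hQ
    have hPz : Polynomial.eval l0 P = 0 := by
      rw [hP, Polynomial.eval_prod]
      exact Finset.prod_eq_zero hl0 (by simp)
    rw [Polynomial.eval_add, Polynomial.eval_mul, Polynomial.eval_C, hPz, mul_zero, zero_add,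
      Polynomial.eval_finset_sum, Polynomial.eval_zero] at hev
    have hsum : ∑ l ∈ s, Polynomial.eval l0 (Polynomial.C (c l)
        * ∏ μ ∈ s.erase l, (Polynomial.X - Polynomial.C μ))
        = c l0 * ∏ μ ∈ s.erase l0, (l0 - μ) := by
      rw [Finset.sum_eq_single_of_mem l0 hl0]
      · simp [Polynomial.eval_prod]
      · intro l hl hne
        rw [Polynomial.eval_mul, Polynomial.eval_prod]
        have : ∏ μ ∈ s.erase l, Polynomial.eval l0 (Polynomial.X - Polynomial.C μ) = 0 :=
          Finset.prod_eq_zero (Finset.mem_erase.mpr ⟨hne.symm, hl0⟩) (by simp)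
        rw [this, mul_zero]
    rw [hsum] at hev
    have hprod : ∏ μ ∈ s.erase l0, (l0 - μ) ≠ 0 := by
      rw [Finset.prod_ne_zero_iff]
      intro μ hμ
      exact sub_ne_zero.mpr (Ne.symm (Finset.mem_erase.mp hμ).1)
    exact (mul_eq_zero.mp hev).resolve_right hprod
  refine ⟨?_, hc⟩
  have : d • (1 : RatFunc k) = 0 := by
    rw [← h, Finset.sum_eq_zero (fun l hl => by rw [hc l hl, zero_smul]), add_zero]
  simpa using this

lemma li_F : LinearIndependent k (fun l : k => (RatFunc.X - RatFunc.C l)⁻¹) := by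
  rw [linearIndependent_iff']
  intro s g hg i hi
  exact (keyA k s g 0 (by simpa using hg)).2 i hi

lemma one_not_mem : (1 : RatFunc k)
    ∉ Submodule.span k (Set.range (fun l : k => (RatFunc.X - RatFunc.C l)⁻¹)) := by
  intro h
  rw [Finsupp.mem_span_range_iff_exists_finsupp] at h
  obtain ⟨c, hc⟩ := h
  have h0 : (-1 : k) • (1 : RatFunc k)
      + ∑ l ∈ c.support, c l • (RatFunc.X - RatFunc.C l)⁻¹ = 0 := by
    rw [show ∑ l ∈ c.support, c l • (RatFunc.X - RatFunc.C l)⁻¹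
        = (c.sum fun l a => a • (RatFunc.X - RatFunc.C l)⁻¹) from rfl, hc]
    simp
  have := (keyA k c.support c (-1) h0).1
  norm_num at this

lemma li_G : LinearIndependent k
    (fun o => Option.casesOn' o (1 : RatFunc k)
      (fun l : k => (RatFunc.X - RatFunc.C l)⁻¹) : Option k → RatFunc k) :=
  (li_F k).option (one_not_mem k)

variable (I : Set k)

lemma liI : LinearIndependent k (fun i : I => (RatFunc.X - RatFunc.C (i : k))⁻¹) :=
  (li_F k).comp _ Subtype.val_injective

lemma VI_def : VI k I = Submodule.span k ((fun l : k => (RatFunc.X - RatFunc.C l)⁻¹) '' I) :=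
  rfl

lemma WI_def : WI k I = VI k I ⊔ Submodule.span k {1} := rfl

lemma VI_eq : VI k I
    = Submodule.span k (Set.range (fun i : I => (RatFunc.X - RatFunc.C (i : k))⁻¹)) := by
  rw [VI, Set.image_eq_range]

/-- Module.Basis of `V(I)` given by the `1/(T - λ)`. -/
noncomputable def bI : Module.Basis I k (VI k I) :=
  (Module.Basis.span (liI k I)).map (LinearEquiv.ofEq _ _ (VI_eq k I).symm)

lemma bI_coe (i : I) : (bI k I i : RatFunc k) = (RatFunc.X - RatFunc.C (i : k))⁻¹ := by
  simp [bI, Module.Basis.span_apply]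

/-- The family `1, 1/(T - λ)` indexed by `Option I`. -/
noncomputable def wfam : Option I → RatFunc k :=
  fun o => Option.casesOn' o 1 (fun i : I => (RatFunc.X - RatFunc.C (i : k))⁻¹)

lemma liW : LinearIndependent k (wfam k I) := by
  have h := (li_G k).comp (Option.map (Subtype.val : I → k))
    (Option.map_injective Subtype.val_injective)
  have he : wfam k I = (fun o => Option.casesOn' o (1 : RatFunc k)
      (fun l : k => (RatFunc.X - RatFunc.C l)⁻¹)) ∘ Option.map (Subtype.val : I → k) := by
    funext o; cases o <;> rfl
  rw [he]
  exact h

lemma WI_eq : WI k I = Submodule.span k (Set.range (wfam k I)) := by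
  have hr : Set.range (wfam k I)
      = Set.range (fun i : I => (RatFunc.X - RatFunc.C (i : k))⁻¹) ∪ {1} := by
    ext x
    constructor
    · rintro ⟨o, rfl⟩
      cases o with
      | none => right; rfl
      | some i => left; exact ⟨i, rfl⟩
    · rintro (⟨i, rfl⟩ | rfl)
      exacts [⟨some i, rfl⟩, ⟨none, rfl⟩]
  rw [hr, Submodule.span_union, WI, VI_eq]

/-- Module.Basis of `W(I)` given by `1` and the `1/(T - λ)`. -/
noncomputable def bW : Module.Basis (Option I) k (WI k I) :=
  (Module.Basis.span (liW k I)).map (LinearEquiv.ofEq _ _ (WI_eq k I).symm)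

lemma bW_coe (o : Option I) : (bW k I o : RatFunc k) = wfam k I o := by
  simp [bW, Module.Basis.span_apply]

variable {k}

lemma ker_comap_repr {ι κ M : Type u} [AddCommGroup M] [Module k M]
    (b : Module.Basis ι k M) (e : κ → ι) (he : Function.Injective e) (s : Set ι)
    (hs : ∀ i, i ∈ s ↔ ¬ ∃ y, e y = i) :
    LinearMap.ker ((Finsupp.lcomapDomain e he : (ι →₀ k) →ₗ[k] κ →₀ k).comp
        (b.repr : M →ₗ[k] ι →₀ k))
      = Submodule.span k (⇑b '' s) := by
  ext x
  rw [LinearMap.mem_ker, LinearMap.comp_apply, Module.Basis.mem_span_image]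
  constructor
  · intro h i hi
    rw [hs]
    rintro ⟨y, rfl⟩
    have h2 : b.repr x (e y) = 0 := DFunLike.congr_fun h y
    exact Finsupp.mem_support_iff.mp hi h2
  · intro h
    ext y
    show b.repr x (e y) = 0
    by_contra hne
    have hmem := h (Finsupp.mem_support_iff.mpr hne)
    rw [hs] at hmem
    exact hmem ⟨y, rfl⟩

lemma surj_comap_repr {ι κ M : Type u} [AddCommGroup M] [Module k M]
    (b : Module.Basis ι k M) (e : κ → ι) (he : Function.Injective e) :
    Function.Surjective ((Finsupp.lcomapDomain e he : (ι →₀ k) →ₗ[k] κ →₀ k).comp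
        (b.repr : M →ₗ[k] ι →₀ k)) := by
  intro y
  refine ⟨b.repr.symm (Finsupp.embDomain ⟨e, he⟩ y), ?_⟩
  ext x
  rw [LinearMap.comp_apply, LinearEquiv.coe_coe, LinearEquiv.apply_symm_apply]
  exact Finsupp.embDomain_apply_self ⟨e, he⟩ y x

end KronSES


set_option maxHeartbeats 1000000 in
set_option synthInstance.maxHeartbeats 1000000 in
/-- For `J ⊆ I ⊆ k` there is a short exact sequence of Kronecker representations
`0 → P(J) → P(I) → S(I \ J) → 0`. -/
theorem exists_shortExact_PJ_PI_S
    [IsAlgClosed k] (I J : Set k) (hJI : J ⊆ I) :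
    ∃ (f : KronHom (Prep k J) (Prep k I)) (g : KronHom (Prep k I) (Srep k (I \ J))),
      Function.Injective f.φ ∧ Function.Injective f.ψ ∧
      Function.Surjective g.φ ∧ Function.Surjective g.ψ ∧
      LinearMap.range f.φ = LinearMap.ker g.φ ∧
      LinearMap.range f.ψ = LinearMap.ker g.ψ := by
  classical
  have hVJI : VI k J ≤ VI k I := Submodule.span_mono (Set.image_mono hJI)
  have hWJI : WI k J ≤ WI k I := sup_le_sup_right hVJI _
  set e : (I \ J : Set k) → I := fun x => ⟨x.1, x.2.1⟩ with he_def
  have he : Function.Injective e := fun a b h => Subtype.ext (congrArg (Subtype.val : I → k) h)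
  set e' : (I \ J : Set k) → Option I := fun x => some (e x) with he'_def
  have he' : Function.Injective e' := fun a b h => he (Option.some_injective _ h)
  set b1 := KronSES.bI k I with hb1
  set b2 := KronSES.bW k I with hb2
  set gφ : ↥(VI k I) →ₗ[k] ((I \ J : Set k) →₀ k) :=
    (Finsupp.lcomapDomain e he : (I →₀ k) →ₗ[k] (I \ J : Set k) →₀ k).comp
      (b1.repr : _ →ₗ[k] I →₀ k) with hgφ
  set gψ : ↥(WI k I) →ₗ[k] ((I \ J : Set k) →₀ k) :=
    (Finsupp.lcomapDomain e' he' : (Option I →₀ k) →ₗ[k] (I \ J : Set k) →₀ k).comp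
      (b2.repr : _ →ₗ[k] Option I →₀ k) with hgψ
  -- f
  set fφ : ↥(VI k J) →ₗ[k] ↥(VI k I) := Submodule.inclusion hVJI with hfφ
  set fψ : ↥(WI k J) →ₗ[k] ↥(WI k I) := Submodule.inclusion hWJI with hfψ
  have fca : (Prep k I).a.comp fφ = fψ.comp (Prep k J).a := by
    refine LinearMap.ext fun x => Subtype.ext ?_; rfl
  have fcb : (Prep k I).b.comp fφ = fψ.comp (Prep k J).b := by
    refine LinearMap.ext fun x => Subtype.ext ?_; rfl
  -- commutation of g with a
  have ha : ∀ i : I, (Prep k I).a (b1 i) = b2 (some i) := by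
    intro i
    refine Subtype.ext ?_
    show (b1 i : RatFunc k) = (b2 (some i) : RatFunc k)
    rw [hb1, hb2, KronSES.bI_coe, KronSES.bW_coe]
    rfl
  have gca : (Srep k (I \ J)).a.comp gφ = gψ.comp (Prep k I).a := by
    apply b1.ext
    intro i
    show (Srep k (I \ J)).a (gφ (b1 i)) = gψ ((Prep k I).a (b1 i))
    rw [ha i]
    show gφ (b1 i) = gψ (b2 (some i))
    rw [hgφ, hgψ]
    simp only [LinearMap.comp_apply, LinearEquiv.coe_coe, Module.Basis.repr_self]
    ext x
    show (Finsupp.single i (1:k)) (e x) = (Finsupp.single (some i) (1:k)) (some (e x))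
    simp [Finsupp.single_apply]
  -- commutation of g with b
  have hb : ∀ i : I, (Prep k I).b (b1 i) = (i : k) • b2 (some i) + b2 none := by
    intro i
    have hval : RatFunc.X * (b1 i : RatFunc k)
        = (((i : k) • b2 (some i) + b2 none : ↥(WI k I)) : RatFunc k) := by
      simp only [Submodule.coe_add, SetLike.val_smul]
      rw [hb1, hb2, KronSES.bI_coe, KronSES.bW_coe, KronSES.bW_coe]
      show RatFunc.X * (RatFunc.X - RatFunc.C (i:k))⁻¹
          = (i : k) • (RatFunc.X - RatFunc.C (i:k))⁻¹ + 1
      have hne := KronSES.Xsub_ne_zero k (i : k)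
      rw [Algebra.smul_def]
      field_simp
      rw [RatFunc.algebraMap_eq_C]
      ring
    exact Subtype.ext hval
  have hcompφ : ∀ i : I, gφ (b1 i)
      = (Finsupp.lcomapDomain e he : (I →₀ k) →ₗ[k] (I \ J : Set k) →₀ k)
          (Finsupp.single i 1) := by
    intro i
    rw [hgφ]
    simp only [LinearMap.comp_apply, LinearEquiv.coe_coe, Module.Basis.repr_self]
  have gcb : (Srep k (I \ J)).b.comp gφ = gψ.comp (Prep k I).b := by
    apply b1.ext
    intro i
    show (Srep k (I \ J)).b (gφ (b1 i)) = gψ ((Prep k I).b (b1 i))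
    rw [hb i, map_add, map_smul]
    have h2 : ∀ o : Option I, gψ (b2 o)
        = (Finsupp.lcomapDomain e' he' : (Option I →₀ k) →ₗ[k] (I \ J : Set k) →₀ k)
            (Finsupp.single o 1) := by
      intro o
      rw [hgψ]
      simp only [LinearMap.comp_apply, LinearEquiv.coe_coe, Module.Basis.repr_self]
    rw [h2, h2, hcompφ]
    have hnone : (Finsupp.lcomapDomain e' he' : (Option I →₀ k) →ₗ[k] (I \ J : Set k) →₀ k)
        (Finsupp.single none 1) = 0 := by
      ext x
      show (Finsupp.single (none : Option I) (1:k)) (some (e x)) = 0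
      exact Finsupp.single_eq_of_ne (by simp)
    rw [hnone, add_zero]
    by_cases hij : (i : k) ∈ J
    · have h0 : (Finsupp.lcomapDomain e he : (I →₀ k) →ₗ[k] (I \ J : Set k) →₀ k)
          (Finsupp.single i 1) = 0 := by
        ext x
        show (Finsupp.single i (1:k)) (e x) = 0
        refine Finsupp.single_eq_of_ne' fun hcontr => ?_
        have hvx : (x : k) = (i : k) := (congrArg (Subtype.val : I → k) hcontr).symm
        exact x.2.2 (by rw [hvx]; exact hij)
      have h0' : (Finsupp.lcomapDomain e' he' : (Option I →₀ k) →ₗ[k] (I \ J : Set k) →₀ k)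
          (Finsupp.single (some i) 1) = 0 := by
        ext x
        show (Finsupp.single (some i) (1:k)) (some (e x)) = 0
        refine Finsupp.single_eq_of_ne' fun hcontr => ?_
        have h3 : i = e x := Option.some_injective _ hcontr
        have hvx : (x : k) = (i : k) := (congrArg (Subtype.val : I → k) h3).symm
        exact x.2.2 (by rw [hvx]; exact hij)
      rw [h0, h0', smul_zero]; exact (Srep k (I \ J)).b.map_zero
    · set x0 : (I \ J : Set k) := ⟨(i : k), ⟨i.2, hij⟩⟩ with hx0
      have hex : e x0 = i := rfl
      have h1 : (Finsupp.lcomapDomain e he : (I →₀ k) →ₗ[k] (I \ J : Set k) →₀ k)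
          (Finsupp.single i 1) = Finsupp.single x0 1 := by
        ext y
        show (Finsupp.single i (1:k)) (e y) = (Finsupp.single x0 (1:k)) y
        rcases eq_or_ne y x0 with rfl | hy
        · rw [hex]; simp
        · have hne1 : i ≠ e y := by
            intro hc
            apply hy
            apply he
            rw [hex]
            exact hc.symm
          rw [Finsupp.single_eq_of_ne' hne1, Finsupp.single_eq_of_ne' (Ne.symm hy)]
      have h1' : (Finsupp.lcomapDomain e' he' : (Option I →₀ k) →ₗ[k] (I \ J : Set k) →₀ k)
          (Finsupp.single (some i) 1) = Finsupp.single x0 1 := by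
        ext y
        show (Finsupp.single (some i) (1:k)) (some (e y)) = (Finsupp.single x0 (1:k)) y
        rcases eq_or_ne y x0 with rfl | hy
        · rw [hex]; simp
        · have hne1 : i ≠ e y := by
            intro hc
            apply hy
            apply he
            rw [hex]
            exact hc.symm
          have hne2 : (some i : Option I) ≠ some (e y) :=
            fun hc => hne1 (Option.some_injective _ hc)
          rw [Finsupp.single_eq_of_ne' hne2, Finsupp.single_eq_of_ne' (Ne.symm hy)]
      rw [h1, h1']
      show (Finsupp.lsum k fun μ : (I \ J : Set k) => (μ : k) • Finsupp.lsingle μ)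
          (Finsupp.single x0 1) = (i : k) • Finsupp.single x0 1
      rw [Finsupp.lsum_single]
      simp [hx0]
  refine ⟨⟨fφ, fψ, fca, fcb⟩, ⟨gφ, gψ, gca, gcb⟩,
    Submodule.inclusion_injective hVJI, Submodule.inclusion_injective hWJI,
    KronSES.surj_comap_repr b1 e he, KronSES.surj_comap_repr b2 e' he', ?_, ?_⟩
  · -- exactness at V
    show LinearMap.range fφ = LinearMap.ker gφ
    set sI : Set I := {i : I | (i : k) ∈ J} with hsI
    have hker : LinearMap.ker gφ = Submodule.span k (⇑b1 '' sI) := by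
      rw [hgφ]
      refine KronSES.ker_comap_repr b1 e he sI fun i => ?_
      constructor
      · rintro hi ⟨y, rfl⟩
        exact y.2.2 hi
      · intro hni
        by_contra hij
        exact hni ⟨⟨(i : k), ⟨i.2, hij⟩⟩, rfl⟩
    rw [hker, hfφ, Submodule.range_inclusion]
    have hmap : Submodule.map (VI k I).subtype (Submodule.span k (⇑b1 '' sI)) = VI k J := by
      rw [Submodule.map_span, KronSES.VI_def k J]
      congr 1
      ext z
      constructor
      · rintro ⟨_, ⟨i, hi, rfl⟩, rfl⟩
        exact ⟨(i : k), hi, (KronSES.bI_coe k I i).symm⟩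
      · rintro ⟨l, hl, rfl⟩
        exact ⟨b1 ⟨l, hJI hl⟩, ⟨⟨l, hJI hl⟩, hl, rfl⟩, KronSES.bI_coe k I ⟨l, hJI hl⟩⟩
    ext x
    rw [Submodule.mem_comap]
    constructor
    · intro h
      rw [← hmap] at h
      obtain ⟨y, hy, hyx⟩ := h
      have hyx' : y = x := Subtype.ext hyx
      rwa [← hyx']
    · intro h
      have h2 := Submodule.mem_map_of_mem (f := (VI k I).subtype) h
      rw [hmap] at h2
      exact h2
  · -- exactness at W
    show LinearMap.range fψ = LinearMap.ker gψ
    set sW : Set (Option I) := {o : Option I | Option.casesOn' o True (fun i => (i : k) ∈ J)}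
      with hsW
    have hker : LinearMap.ker gψ = Submodule.span k (⇑b2 '' sW) := by
      rw [hgψ]
      refine KronSES.ker_comap_repr b2 e' he' sW fun o => ?_
      cases o with
      | none =>
        simp only [hsW, Set.mem_setOf_eq, Option.casesOn'_none]
        constructor
        · rintro - ⟨y, hy⟩
          exact Option.some_ne_none _ hy
        · intro _; trivial
      | some i =>
        simp only [hsW, Set.mem_setOf_eq, Option.casesOn'_some]
        constructor
        · rintro hi ⟨y, hy⟩
          have h3 : e y = i := Option.some_injective _ hy
          have hvy : (y : k) = (i : k) := congrArg (Subtype.val : I → k) h3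
          exact y.2.2 (by rw [hvy]; exact hi)
        · intro hni
          by_contra hij
          exact hni ⟨⟨(i : k), ⟨i.2, hij⟩⟩, rfl⟩
    rw [hker, hfψ, Submodule.range_inclusion]
    have hmap : Submodule.map (WI k I).subtype (Submodule.span k (⇑b2 '' sW)) = WI k J := by
      rw [Submodule.map_span, KronSES.WI_def k J, KronSES.VI_def k J, ← Submodule.span_union]
      congr 1
      ext z
      constructor
      · rintro ⟨_, ⟨o, ho, rfl⟩, rfl⟩
        cases o with
        | none =>
          right
          exact KronSES.bW_coe k I none
        | some i =>
          left
          exact ⟨(i : k), ho, (KronSES.bW_coe k I (some i)).symm⟩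
      · rintro (⟨l, hl, rfl⟩ | rfl)
        · exact ⟨b2 (some ⟨l, hJI hl⟩), ⟨some ⟨l, hJI hl⟩, hl, rfl⟩,
            KronSES.bW_coe k I (some ⟨l, hJI hl⟩)⟩
        · exact ⟨b2 none, ⟨none, trivial, rfl⟩, KronSES.bW_coe k I none⟩
    ext x
    rw [Submodule.mem_comap]
    constructor
    · intro h
      rw [← hmap] at h
      obtain ⟨y, hy, hyx⟩ := h
      have hyx' : y = x := Subtype.ext hyx
      rwa [← hyx']
    · intro h
      have h2 := Submodule.mem_map_of_mem (f := (WI k I).subtype) h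
      rw [hmap] at h2
      exact h2
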